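/- Combined map-based witness: let E_{t₁}, E_{t₂} be CPT maps on C^d, χ_{t} = (E_t ⊗ id)(|Ψ⁺⟩⟨Ψ⁺|) their Choi states with |Ψ⁺⟩ maximally entangled, and define Δ(t₁,t₂) = max{0, √(2/(d²(d²−1))) · max{‖χ_{t₂}^{T₁}‖₁ − 1, ‖χ_{t₂}^{T₂}‖₁ − 1} − √(2(1 − tr((tr₂ χ_{t₁})²)))}. If Δ(t₁,t₂) > 0 then (E_{t₁}, E_{t₂}) is not realizable with classical memory. -/

import Mathlib

open Matrix
open scoped Kronecker Classical ComplexOrder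

noncomputable section

/-- A density matrix: positive semidefinite with unit trace. -/
def IsDensity {N : Type*} [Fintype N] (ρ : Matrix N N ℂ) : Prop :=
  ρ.PosSemidef ∧ ρ.trace = 1

/-- Outer product `|ψ⟩⟨ψ|`. -/
def outer {N : Type*} (ψ : N → ℂ) : Matrix N N ℂ :=
  Matrix.of fun i j => ψ i * star (ψ j)

/-- Squared norm of a vector. -/
def vnormSq {N : Type*} [Fintype N] (ψ : N → ℂ) : ℝ := ∑ x, ‖ψ x‖ ^ 2

/-- Partial transpose with respect to the first tensor factor. -/
def pt₁ {m n : Type*} (ρ : Matrix (m × n) (m × n) ℂ) : Matrix (m × n) (m × n) ℂ :=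
  Matrix.of fun p q => ρ (q.1, p.2) (p.1, q.2)

/-- Partial transpose with respect to the second tensor factor. -/
def pt₂ {m n : Type*} (ρ : Matrix (m × n) (m × n) ℂ) : Matrix (m × n) (m × n) ℂ :=
  Matrix.of fun p q => ρ (p.1, q.2) (q.1, p.2)

/-- Partial trace over the first tensor factor. -/
def ptr₁ {m n : Type*} [Fintype m] (ρ : Matrix (m × n) (m × n) ℂ) : Matrix n n ℂ :=
  Matrix.of fun j l => ∑ i, ρ (i, j) (i, l)

/-- Partial trace over the second tensor factor. -/
def ptr₂ {m n : Type*} [Fintype n] (ρ : Matrix (m × n) (m × n) ℂ) : Matrix m m ℂ :=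
  Matrix.of fun i k => ∑ j, ρ (i, j) (k, j)

/-- Square root of a positive semidefinite matrix (as `Matrix.PosSemidef.sqrt` in the older Mathlib). -/
def Matrix.PosSemidef.sqrt {n 𝕜 : Type*} [Fintype n] [RCLike 𝕜] [DecidableEq n] {A : Matrix n n 𝕜}
    (hA : A.PosSemidef) : Matrix n n 𝕜 :=
  hA.1.eigenvectorUnitary.1 * diagonal ((↑) ∘ (√·) ∘ hA.1.eigenvalues) *
    (star hA.1.eigenvectorUnitary : Matrix n n 𝕜)

/-- Trace norm (sum of singular values): `‖A‖₁ = tr √(AᴴA)`. -/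
def traceNorm {N : Type*} [Fintype N] [DecidableEq N] (A : Matrix N N ℂ) : ℝ :=
  ((Matrix.posSemidef_conjTranspose_mul_self A).sqrt.trace).re

/-- Purity `tr ρ²` (real part). -/
def purity {N : Type*} [Fintype N] (ρ : Matrix N N ℂ) : ℝ := ((ρ * ρ).trace).re

/-- Separability of a bipartite density matrix. -/
def Separable {m n : Type*} [Fintype m] [Fintype n]
    (ρ : Matrix (m × n) (m × n) ℂ) : Prop :=
  ∃ (k : ℕ) (p : Fin k → ℝ) (σ : Fin k → Matrix m m ℂ) (τ : Fin k → Matrix n n ℂ),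
    (∀ i, 0 ≤ p i) ∧ (∑ i, p i = 1) ∧ (∀ i, IsDensity (σ i)) ∧ (∀ i, IsDensity (τ i)) ∧
    ρ = ∑ i, (p i : ℂ) • (σ i ⊗ₖ τ i)

/-- Extension `E ⊗ id` of a map on the first factor to a bipartite space. -/
def tensExtA {s n : Type*} (E : Matrix s s ℂ → Matrix s s ℂ)
    (X : Matrix (s × n) (s × n) ℂ) : Matrix (s × n) (s × n) ℂ :=
  Matrix.of fun p q => E (Matrix.of fun i k => X (i, p.2) (k, q.2)) p.1 q.1

/-- Extension `id ⊗ A` of a map on the second factor to a bipartite space. -/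
def tensExtSys {e s : Type*} (A : Matrix s s ℂ → Matrix s s ℂ)
    (X : Matrix (e × s) (e × s) ℂ) : Matrix (e × s) (e × s) ℂ :=
  Matrix.of fun p q => A (Matrix.of fun i k => X (p.1, i) (q.1, k)) p.2 q.2

/-- Complete positivity: `E ⊗ id_n` maps PSD matrices to PSD matrices for every `n`. -/
def IsCP {s : Type*} [Fintype s] (E : Matrix s s ℂ → Matrix s s ℂ) : Prop :=
  ∀ (n : ℕ) (X : Matrix (s × Fin n) (s × Fin n) ℂ), X.PosSemidef → (tensExtA E X).PosSemidef

/-- Trace preservation. -/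
def IsTP {s : Type*} [Fintype s] (E : Matrix s s ℂ → Matrix s s ℂ) : Prop :=
  ∀ X, (E X).trace = X.trace

/-- The maximally entangled unit vector `|Ψ⁺⟩ = (1/√d) Σᵢ |i⟩⊗|i⟩`. -/
def maxEntVec (d : ℕ) : Fin d × Fin d → ℂ :=
  fun p => if p.1 = p.2 then (((Real.sqrt d)⁻¹ : ℝ) : ℂ) else 0

/-- The Choi state `χ[E] = (E ⊗ id)(|Ψ⁺⟩⟨Ψ⁺|)` of a map `E`. -/
def ChoiMap {d : ℕ} (E : Matrix (Fin d) (Fin d) ℂ → Matrix (Fin d) (Fin d) ℂ) :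
    Matrix (Fin d × Fin d) (Fin d × Fin d) ℂ :=
  tensExtA E (outer (maxEntVec d))

/-- Choi state of a single-intervention process tensor `T`, viewed as a function of the
initial system state and the intervention (a CP map). The first index pair is the first
time segment (intervention input leg, initial state leg), the second pair is the second
time segment (final state leg, intervention output leg). It is obtained by letting `T`
act on halves of maximally entangled pairs, i.e. on matrix units with `1/d` weights. -/
def ChoiPT {d : ℕ}
    (T : Matrix (Fin d) (Fin d) ℂ →
      (Matrix (Fin d) (Fin d) ℂ → Matrix (Fin d) (Fin d) ℂ) → Matrix (Fin d) (Fin d) ℂ) :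
    Matrix ((Fin d × Fin d) × (Fin d × Fin d)) ((Fin d × Fin d) × (Fin d × Fin d)) ℂ :=
  Matrix.of fun p q => (d : ℂ)⁻¹ * (d : ℂ)⁻¹ *
    (T (Matrix.single p.1.2 q.1.2 1)
       (fun ρ => ρ p.1.1 q.1.1 • Matrix.single p.2.2 q.2.2 1)) p.2.1 q.2.1

/-- A single-intervention process tensor has classical memory if it is a composition of
conditioned instruments: `T[ρ, A] = Σᵢ Φᵢ(A(Iᵢ(ρ)))` with `{Iᵢ}` a quantum instrument
(each `Iᵢ` CP, their sum trace preserving) and each `Φᵢ` a CPT map. -/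
def HasClassicalMemory {d : ℕ}
    (T : Matrix (Fin d) (Fin d) ℂ →
      (Matrix (Fin d) (Fin d) ℂ → Matrix (Fin d) (Fin d) ℂ) → Matrix (Fin d) (Fin d) ℂ) :
    Prop :=
  ∃ (k : ℕ) (I Φ : Fin k → (Matrix (Fin d) (Fin d) ℂ → Matrix (Fin d) (Fin d) ℂ)),
    (∀ i, IsLinearMap ℂ (I i)) ∧ (∀ i, IsCP (I i)) ∧ IsTP (fun ρ => ∑ i, I i ρ) ∧
    (∀ i, IsLinearMap ℂ (Φ i)) ∧ (∀ i, IsCP (Φ i)) ∧ (∀ i, IsTP (Φ i)) ∧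
    (∀ ρ A, T ρ A = ∑ i, Φ i (A (I i ρ)))

/-- Action of a Kraus operator on the first factor of a bipartite vector: `(L ⊗ I)ψ`. -/
def lact {m n : Type*} [Fintype m] (L : Matrix m m ℂ) (ψ : m × n → ℂ) : m × n → ℂ :=
  fun p => ∑ i, L p.1 i * ψ (i, p.2)

/-- Concurrence of a pure bipartite state: `C(ψ) = √(2(1 − tr((tr₂|ψ⟩⟨ψ|)²)))`. -/
def concPure {m n : Type*} [Fintype m] [Fintype n] (ψ : m × n → ℂ) : ℝ :=
  Real.sqrt (2 * (1 - purity (ptr₂ (outer ψ))))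

/-- The set of average values `Σₖ pₖ f(ψₖ)` over all pure-state decompositions of `ρ`. -/
def decompAvgs {m n : Type*} [Fintype m] [Fintype n]
    (f : (m × n → ℂ) → ℝ) (ρ : Matrix (m × n) (m × n) ℂ) : Set ℝ :=
  { r | ∃ (k : ℕ) (p : Fin k → ℝ) (ψ : Fin k → m × n → ℂ),
      (∀ i, 0 < p i) ∧ (∑ i, p i = 1) ∧ (∀ i, vnormSq (ψ i) = 1) ∧
      (ρ = ∑ i, (p i : ℂ) • outer (ψ i)) ∧ r = ∑ i, p i * f (ψ i) }

/-- An entanglement monotone: a nonnegative function of pure bipartite states whose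
average does not increase under local CP operations (given by Kraus operators) on the
system (first) factor. -/
def IsEntMonotone {m n : Type*} [Fintype m] [Fintype n] (f : (m × n → ℂ) → ℝ) : Prop :=
  (∀ ψ, 0 ≤ f ψ) ∧
  ∀ (k : ℕ) (L : Fin k → Matrix m m ℂ), (∑ j, (L j)ᴴ * L j) = 1 →
    ∀ ψ : m × n → ℂ, vnormSq ψ = 1 →
      (∑ j, if vnormSq (lact (L j) ψ) = 0 then 0 else
        vnormSq (lact (L j) ψ) *
          f (fun x => (((Real.sqrt (vnormSq (lact (L j) ψ)))⁻¹ : ℝ) : ℂ) * lact (L j) ψ x))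
        ≤ f ψ

end

section SqrtAux
open scoped MatrixOrder

lemma psdSqrt_eq_cfc {n : Type*} [Fintype n] [DecidableEq n] {A : Matrix n n ℂ}
    (hA : A.PosSemidef) : hA.sqrt = CFC.sqrt A := by
  rw [CFC.sqrt_eq_cfc, cfc_nnreal_eq_real _ A, hA.1.cfc_eq]
  simp only [Matrix.IsHermitian.cfc, Unitary.conjStarAlgAut_apply, Matrix.PosSemidef.sqrt]
  congr 3
  funext i
  simp [Real.coe_sqrt, Real.coe_toNNReal _ (hA.eigenvalues_nonneg i),
    max_eq_left (hA.eigenvalues_nonneg i)]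

lemma Matrix.PosSemidef.posSemidef_sqrt {n : Type*} [Fintype n] [DecidableEq n]
    {A : Matrix n n ℂ} (hA : A.PosSemidef) : hA.sqrt.PosSemidef := by
  rw [psdSqrt_eq_cfc]
  exact (CFC.sqrt_nonneg A).posSemidef

lemma Matrix.PosSemidef.sqrt_mul_self {n : Type*} [Fintype n] [DecidableEq n]
    {A : Matrix n n ℂ} (hA : A.PosSemidef) : hA.sqrt * hA.sqrt = A := by
  rw [psdSqrt_eq_cfc]
  exact CFC.sqrt_mul_sqrt_self A hA.nonneg

lemma Matrix.PosSemidef.sq_sqrt {n : Type*} [Fintype n] [DecidableEq n]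
    {A : Matrix n n ℂ} (hA : A.PosSemidef) : hA.sqrt ^ 2 = A := by
  rw [sq, hA.sqrt_mul_self]

lemma Matrix.PosSemidef.eq_sqrt_of_sq_eq {n : Type*} [Fintype n] [DecidableEq n]
    {S B : Matrix n n ℂ} (hS : S.PosSemidef) (hB : B.PosSemidef) (h : S ^ 2 = B) :
    S = hB.sqrt := by
  rw [psdSqrt_eq_cfc]
  exact (CFC.sqrt_unique (by rw [← sq]; exact h) hS.nonneg).symm

end SqrtAux

noncomputable section AuxLemmas
open Matrix

variable {n : Type*} [Fintype n] [DecidableEq n]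

def cdiag (v : n → ℝ) : Matrix n n ℂ := Matrix.diagonal (fun i => (v i : ℂ))

lemma cdiag_psd {v : n → ℝ} (h : ∀ i, 0 ≤ v i) : (cdiag v).PosSemidef :=
  Matrix.PosSemidef.diagonal (Pi.le_def.mpr fun i => by
    simp only [Pi.zero_apply]; exact_mod_cast h i)

lemma cdiag_mul (v w : n → ℝ) : cdiag v * cdiag w = cdiag (fun i => v i * w i) := by
  simp [cdiag, diagonal_mul_diagonal]

lemma re_sum_coe (v : n → ℝ) : (∑ i, (v i : ℂ)).re = ∑ i, v i := by
  rw [← Complex.ofReal_sum]; simp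

def conjU {A : Matrix n n ℂ} (hA : A.IsHermitian) (v : n → ℝ) : Matrix n n ℂ :=
  (hA.eigenvectorUnitary : Matrix n n ℂ) * cdiag v * star (hA.eigenvectorUnitary : Matrix n n ℂ)

lemma star_mul_self_eigen {A : Matrix n n ℂ} (hA : A.IsHermitian) :
    star (hA.eigenvectorUnitary : Matrix n n ℂ) * (hA.eigenvectorUnitary : Matrix n n ℂ) = 1 :=
  mem_unitaryGroup_iff'.mp hA.eigenvectorUnitary.2

lemma self_mul_star_eigen {A : Matrix n n ℂ} (hA : A.IsHermitian) :
    (hA.eigenvectorUnitary : Matrix n n ℂ) * star (hA.eigenvectorUnitary : Matrix n n ℂ) = 1 :=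
  mem_unitaryGroup_iff.mp hA.eigenvectorUnitary.2

lemma conjU_mul {A : Matrix n n ℂ} (hA : A.IsHermitian) (v w : n → ℝ) :
    conjU hA v * conjU hA w = conjU hA (fun i => v i * w i) := by
  unfold conjU
  rw [← cdiag_mul]
  have h := star_mul_self_eigen hA
  set U := (hA.eigenvectorUnitary : Matrix n n ℂ)
  calc U * cdiag v * star U * (U * cdiag w * star U)
      = U * cdiag v * (star U * U) * cdiag w * star U := by
        simp only [Matrix.mul_assoc]
    _ = U * (cdiag v * cdiag w) * star U := by rw [h]; simp only [Matrix.mul_one, Matrix.mul_assoc]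

lemma conjU_psd {A : Matrix n n ℂ} (hA : A.IsHermitian) {v : n → ℝ} (h : ∀ i, 0 ≤ v i) :
    (conjU hA v).PosSemidef := by
  have := (cdiag_psd h).mul_mul_conjTranspose_same (hA.eigenvectorUnitary : Matrix n n ℂ)
  simpa [conjU, Matrix.star_eq_conjTranspose] using this

lemma conjU_trace {A : Matrix n n ℂ} (hA : A.IsHermitian) (v : n → ℝ) :
    (conjU hA v).trace = ∑ i, (v i : ℂ) := by
  unfold conjU
  rw [trace_mul_cycle, star_mul_self_eigen hA, Matrix.one_mul]
  simp [cdiag, trace_diagonal]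

lemma conjU_sub {A : Matrix n n ℂ} (hA : A.IsHermitian) (v w : n → ℝ) :
    conjU hA v - conjU hA w = conjU hA (fun i => v i - w i) := by
  unfold conjU
  rw [← Matrix.sub_mul, ← Matrix.mul_sub]
  congr 1
  unfold cdiag
  rw [Matrix.diagonal_sub]
  congr 1
  funext i
  push_cast
  rfl

lemma conjU_spectral {A : Matrix n n ℂ} (hA : A.IsHermitian) :
    A = conjU hA hA.eigenvalues := by
  have := hA.spectral_theorem
  rw [Unitary.conjStarAlgAut_apply] at this
  exact this

lemma conjU_one {A : Matrix n n ℂ} (hA : A.IsHermitian) :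
    conjU hA (fun _ => (1:ℝ)) = 1 := by
  unfold conjU
  have : cdiag (fun _ : n => (1:ℝ)) = 1 := by simp [cdiag]
  rw [this, Matrix.mul_one, self_mul_star_eigen hA]

lemma traceNorm_eq_sum_abs {A : Matrix n n ℂ} (hA : A.IsHermitian) :
    traceNorm A = ∑ i, |hA.eigenvalues i| := by
  have hB := Matrix.posSemidef_conjTranspose_mul_self A
  have hsq : Aᴴ * A = conjU hA (fun i => |hA.eigenvalues i| * |hA.eigenvalues i|) := by
    rw [hA.eq]
    conv_lhs => rw [conjU_spectral hA]
    rw [conjU_mul]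
    have : (fun i => hA.eigenvalues i * hA.eigenvalues i)
        = fun i => |hA.eigenvalues i| * |hA.eigenvalues i| := by
      funext i; rw [abs_mul_abs_self]
    rw [this]
  have hS : (conjU hA (fun i => |hA.eigenvalues i|)).PosSemidef :=
    conjU_psd hA (fun i => abs_nonneg _)
  have hS2 : (conjU hA (fun i => |hA.eigenvalues i|)) ^ 2 = Aᴴ * A := by
    rw [pow_two, conjU_mul, hsq]
  have := hS.eq_sqrt_of_sq_eq hB hS2
  unfold traceNorm
  rw [← this, conjU_trace]
  simp

lemma traceNorm_psd {P : Matrix n n ℂ} (hP : P.PosSemidef) : traceNorm P = P.trace.re := by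
  have hB := Matrix.posSemidef_conjTranspose_mul_self P
  have h2 : P ^ 2 = Pᴴ * P := by rw [pow_two, hP.1.eq]
  have := hP.eq_sqrt_of_sq_eq hB h2
  unfold traceNorm
  rw [← this]

lemma trace_eq_sum_eigen {A : Matrix n n ℂ} (hA : A.IsHermitian) :
    A.trace = ∑ i, (hA.eigenvalues i : ℂ) := by
  conv_lhs => rw [conjU_spectral hA]
  rw [conjU_trace]

lemma trace_sq_eq_sum_eigen {A : Matrix n n ℂ} (hA : A.IsHermitian) :
    ((A * A).trace).re = ∑ i, (hA.eigenvalues i) ^ 2 := by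
  conv_lhs => rw [conjU_spectral hA]
  rw [conjU_mul, conjU_trace, re_sum_coe]
  refine Finset.sum_congr rfl fun i _ => ?_
  ring

lemma psd_trace_re_nonneg {P : Matrix n n ℂ} (hP : P.PosSemidef) : 0 ≤ P.trace.re := by
  have h : ∀ i, 0 ≤ (P i i).re := by
    intro i
    have := hP.re_dotProduct_nonneg (Pi.single i 1)
    simpa [dotProduct, mulVec, Pi.single_apply] using this
  simp only [Matrix.trace, Matrix.diag, Complex.re_sum]
  exact Finset.sum_nonneg fun i _ => h i

lemma trace_mul_psd_nonneg {X Y : Matrix n n ℂ} (hX : X.PosSemidef) (hY : Y.PosSemidef) :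
    0 ≤ ((X * Y).trace).re := by
  have hs := hX.posSemidef_sqrt
  have h1 : X * Y = hX.sqrt * (hX.sqrt * Y) := by
    rw [← Matrix.mul_assoc, hX.sqrt_mul_self]
  have h2 : ((X * Y).trace) = ((hX.sqrt * Y * hX.sqrt).trace) := by
    rw [h1, trace_mul_comm]
  have h3 : (hX.sqrt * Y * hX.sqrt).PosSemidef := by
    have := hY.mul_mul_conjTranspose_same hX.sqrt
    rwa [hs.1.eq] at this
  rw [h2]
  exact psd_trace_re_nonneg h3


lemma conjU_mul_A {A : Matrix n n ℂ} (hA : A.IsHermitian) (v : n → ℝ) :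
    conjU hA v * A = conjU hA (fun i => v i * hA.eigenvalues i) := by
  have h : conjU hA v * conjU hA hA.eigenvalues
      = conjU hA (fun i => v i * hA.eigenvalues i) := conjU_mul hA _ _
  rwa [← conjU_spectral hA] at h

lemma jordan {A : Matrix n n ℂ} (hA : A.IsHermitian) :
    ∃ P Q : Matrix n n ℂ, P.PosSemidef ∧ Q.PosSemidef ∧ A = P - Q ∧
      traceNorm A = P.trace.re + Q.trace.re := by
  refine ⟨conjU hA (fun i => max (hA.eigenvalues i) 0),
    conjU hA (fun i => max (-hA.eigenvalues i) 0),
    conjU_psd hA (fun i => le_max_right _ _), conjU_psd hA (fun i => le_max_right _ _), ?_, ?_⟩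
  · rw [conjU_sub]
    refine (conjU_spectral hA).trans (congrArg (conjU hA) (funext fun i => ?_))
    rcases le_total 0 (hA.eigenvalues i) with h | h
    · rw [max_eq_left h, max_eq_right (by linarith), sub_zero]
    · rw [max_eq_right h, max_eq_left (by linarith), zero_sub, neg_neg]
  · rw [traceNorm_eq_sum_abs hA, conjU_trace, conjU_trace, re_sum_coe, re_sum_coe,
      ← Finset.sum_add_distrib]
    congr 1
    funext i
    rcases le_total 0 (hA.eigenvalues i) with h | h
    · rw [abs_of_nonneg h, max_eq_left h, max_eq_right (by linarith), add_zero]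
    · rw [abs_of_nonpos h, max_eq_right h, max_eq_left (by linarith)]; ring

lemma trace_re_mul_le {Pr P : Matrix n n ℂ} (h1Pr : (1 - Pr).PosSemidef)
    (hP : P.PosSemidef) : ((Pr * P).trace).re ≤ P.trace.re := by
  have h := trace_mul_psd_nonneg h1Pr hP
  have e : ((1 - Pr) * P).trace = P.trace - (Pr * P).trace := by
    rw [Matrix.sub_mul, Matrix.one_mul, trace_sub]
  rw [e, Complex.sub_re] at h
  linarith

lemma traceNorm_le_decomp {A P Q : Matrix n n ℂ} (hA : A.IsHermitian)
    (hP : P.PosSemidef) (hQ : Q.PosSemidef) (h : A = P - Q) :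
    traceNorm A ≤ P.trace.re + Q.trace.re := by
  classical
  set lam := hA.eigenvalues with hlam
  set ind : n → ℝ := fun i => if 0 ≤ lam i then 1 else 0 with hind
  have hind0 : ∀ i, 0 ≤ ind i := fun i => by rw [hind]; dsimp only; split <;> norm_num
  have hind1 : ∀ i, 0 ≤ 1 - ind i := fun i => by rw [hind]; dsimp only; split <;> norm_num
  set P1 := conjU hA ind with hP1def
  set P2 := conjU hA (fun i => 1 - ind i) with hP2def
  have hP1 : P1.PosSemidef := conjU_psd hA hind0
  have hP2 : P2.PosSemidef := conjU_psd hA hind1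
  have hone1 : 1 - P1 = P2 := by
    rw [hP1def, hP2def, ← conjU_one hA, conjU_sub]
  have hone2 : 1 - P2 = P1 := by
    rw [hP1def, hP2def, ← conjU_one hA, conjU_sub]
    exact congrArg (conjU hA) (funext fun i => by ring)
  have e1 : ((P1 * A).trace).re = ∑ i, max (lam i) 0 := by
    rw [hP1def, conjU_mul_A hA, conjU_trace, re_sum_coe]
    refine Finset.sum_congr rfl fun i _ => ?_
    rw [hind]
    dsimp only
    split
    · rw [one_mul, max_eq_left (by assumption)]
    · rw [zero_mul, max_eq_right (by linarith [lt_of_not_ge (by assumption : ¬ 0 ≤ lam i)])]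
  have e2 : ((P2 * A).trace).re = -∑ i, max (-lam i) 0 := by
    rw [hP2def, conjU_mul_A hA, conjU_trace, re_sum_coe, ← Finset.sum_neg_distrib]
    refine Finset.sum_congr rfl fun i _ => ?_
    rw [hind]
    dsimp only
    split
    · rw [sub_self, zero_mul, max_eq_right (by linarith), neg_zero]
    · have hl : lam i ≤ 0 := by linarith [lt_of_not_ge (by assumption : ¬ 0 ≤ lam i)]
      rw [max_eq_left (by linarith)]
      ring
  have etn : traceNorm A = ((P1 * A).trace).re - ((P2 * A).trace).re := by
    rw [traceNorm_eq_sum_abs hA, e1, e2, sub_neg_eq_add, ← Finset.sum_add_distrib]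
    congr 1
    funext i
    rcases le_total 0 (lam i) with hl | hl
    · rw [abs_of_nonneg hl, max_eq_left hl, max_eq_right (by linarith), add_zero]
    · rw [abs_of_nonpos hl, max_eq_right hl, max_eq_left (by linarith)]; ring
  have split1 : ∀ (R : Matrix n n ℂ), (R * A).trace = (R * P).trace - (R * Q).trace := by
    intro R
    rw [h, Matrix.mul_sub, trace_sub]
  have b1 : ((P1 * A).trace).re ≤ P.trace.re := by
    rw [split1 P1, Complex.sub_re]
    have := trace_mul_psd_nonneg hP1 hQ
    have := trace_re_mul_le (hone1 ▸ hP2) hP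
    linarith
  have b2 : -((P2 * A).trace).re ≤ Q.trace.re := by
    rw [split1 P2, Complex.sub_re]
    have := trace_mul_psd_nonneg hP2 hP
    have := trace_re_mul_le (hone2 ▸ hP1) hQ
    linarith
  rw [etn]
  linarith

lemma traceNorm_transpose {A : Matrix n n ℂ} (hA : A.IsHermitian) :
    traceNorm Aᵀ = traceNorm A := by
  have hB := Matrix.posSemidef_conjTranspose_mul_self A
  have hBt := Matrix.posSemidef_conjTranspose_mul_self Aᵀ
  have hct : (Aᵀ)ᴴ = (Aᴴ)ᵀ := by ext i j; simp
  have key : (Aᵀ)ᴴ * Aᵀ = (Aᴴ * A)ᵀ := by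
    rw [hct, hA.eq, Matrix.transpose_mul]
  have hS : ((hB.sqrt)ᵀ).PosSemidef := hB.posSemidef_sqrt.transpose
  have hS2 : ((hB.sqrt)ᵀ) ^ 2 = (Aᵀ)ᴴ * Aᵀ := by
    rw [key, pow_two, ← Matrix.transpose_mul, ← pow_two, hB.sq_sqrt]
  have := hS.eq_sqrt_of_sq_eq hBt hS2
  unfold traceNorm
  rw [← this, trace_transpose]


section Kron
variable {m : Type*} [Fintype m] [DecidableEq m]
open scoped Kronecker

lemma kron_conjT (A : Matrix n n ℂ) (B : Matrix m m ℂ) : (A ⊗ₖ B)ᴴ = Aᴴ ⊗ₖ Bᴴ := by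
  ext ⟨i, j⟩ ⟨k, l⟩
  simp [Matrix.conjTranspose_apply, Matrix.kroneckerMap_apply, star_mul']

lemma kron_psd {A : Matrix n n ℂ} {B : Matrix m m ℂ} (hA : A.PosSemidef) (hB : B.PosSemidef) :
    (A ⊗ₖ B).PosSemidef := by
  have h : A ⊗ₖ B = (hA.sqrt ⊗ₖ hB.sqrt)ᴴ * (hA.sqrt ⊗ₖ hB.sqrt) := by
    rw [kron_conjT, hA.posSemidef_sqrt.1.eq, hB.posSemidef_sqrt.1.eq,
      ← Matrix.mul_kronecker_mul, hA.sqrt_mul_self, hB.sqrt_mul_self]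
  rw [h]
  exact Matrix.posSemidef_conjTranspose_mul_self _

lemma sqrt_eq_conjU {B : Matrix n n ℂ} (hB : B.PosSemidef) :
    hB.sqrt = conjU hB.1 (fun i => Real.sqrt (hB.1.eigenvalues i)) := rfl

lemma trace_sqrt_re {B : Matrix n n ℂ} (hB : B.PosSemidef) :
    (hB.sqrt.trace) = ((∑ i, Real.sqrt (hB.1.eigenvalues i) : ℝ) : ℂ) := by
  rw [sqrt_eq_conjU hB, conjU_trace, Complex.ofReal_sum]

lemma traceNorm_eq_of_kron {M : Matrix (n × m) (n × m) ℂ} {B : Matrix n n ℂ} {C : Matrix m m ℂ}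
    (hB : B.PosSemidef) (hC : C.PosSemidef) (h : Mᴴ * M = B ⊗ₖ C) :
    traceNorm M = (∑ i, Real.sqrt (hB.1.eigenvalues i)) * (∑ j, Real.sqrt (hC.1.eigenvalues j)) := by
  have hK := Matrix.posSemidef_conjTranspose_mul_self M
  have hS : (hB.sqrt ⊗ₖ hC.sqrt).PosSemidef := kron_psd hB.posSemidef_sqrt hC.posSemidef_sqrt
  have hS2 : (hB.sqrt ⊗ₖ hC.sqrt) ^ 2 = Mᴴ * M := by
    rw [pow_two, ← Matrix.mul_kronecker_mul, hB.sqrt_mul_self, hC.sqrt_mul_self, h]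
  have heq := hS.eq_sqrt_of_sq_eq hK hS2
  unfold traceNorm
  rw [← heq, Matrix.trace_kronecker, trace_sqrt_re hB, trace_sqrt_re hC,
    ← Complex.ofReal_mul, Complex.ofReal_re]

end Kron

lemma sqrt_sum_bound {ι : Type*} [Fintype ι] [DecidableEq ι] (μ : ι → ℝ) (hμ : ∀ i, 0 ≤ μ i) :
    (∑ i, Real.sqrt (μ i)) ^ 2 ≤ ∑ i, μ i +
      Real.sqrt ((Fintype.card ι : ℝ) * ((Fintype.card ι : ℝ) - 1)) *
        Real.sqrt ((∑ i, μ i) ^ 2 - ∑ i, (μ i) ^ 2) := by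
  classical
  have hsplit : ∀ f : ι → ℝ, (∑ i, f i) * (∑ i, f i)
      = ∑ i, f i * f i + ∑ p ∈ (Finset.univ : Finset ι).offDiag, f p.1 * f p.2 := by
    intro f
    rw [Finset.sum_mul_sum, ← Finset.sum_product' (f := fun i j => f i * f j),
      ← Finset.diag_union_offDiag (Finset.univ : Finset ι),
      Finset.sum_union (Finset.disjoint_diag_offDiag _), Finset.sum_diag]
  have h1 : (∑ i, Real.sqrt (μ i)) ^ 2
      = ∑ i, μ i + ∑ p ∈ (Finset.univ : Finset ι).offDiag, Real.sqrt (μ p.1) * Real.sqrt (μ p.2) := by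
    rw [pow_two, hsplit]
    congr 1
    exact Finset.sum_congr rfl fun i _ => Real.mul_self_sqrt (hμ i)
  have h2 : (∑ i, μ i) ^ 2 - ∑ i, (μ i) ^ 2
      = ∑ p ∈ (Finset.univ : Finset ι).offDiag, μ p.1 * μ p.2 := by
    rw [pow_two, hsplit]
    simp [pow_two]
  have h3 : ∑ p ∈ (Finset.univ : Finset ι).offDiag, Real.sqrt (μ p.1) * Real.sqrt (μ p.2)
      ≤ Real.sqrt ((Fintype.card ι : ℝ) * ((Fintype.card ι : ℝ) - 1)) *
        Real.sqrt (∑ p ∈ (Finset.univ : Finset ι).offDiag, μ p.1 * μ p.2) := by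
    have hCS := Finset.sum_mul_sq_le_sq_mul_sq (Finset.univ : Finset ι).offDiag (fun _ => (1:ℝ))
      (fun p => Real.sqrt (μ p.1) * Real.sqrt (μ p.2))
    simp only [one_pow, one_mul, Finset.sum_const, nsmul_eq_mul] at hCS
    have hsq : ∀ p : ι × ι, (Real.sqrt (μ p.1) * Real.sqrt (μ p.2)) ^ 2 = μ p.1 * μ p.2 := by
      intro p
      rw [mul_pow, Real.sq_sqrt (hμ _), Real.sq_sqrt (hμ _)]
    simp only [hsq] at hCS
    rw [mul_one] at hCS
    have hcc : (0:ℝ) ≤ (Fintype.card ι : ℝ) * ((Fintype.card ι : ℝ) - 1) := by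
      rcases Nat.eq_zero_or_pos (Fintype.card ι) with h | h
      · simp [h]
      · have : (1:ℝ) ≤ (Fintype.card ι : ℝ) := by exact_mod_cast h
        nlinarith
    have hnn : 0 ≤ ∑ p ∈ (Finset.univ : Finset ι).offDiag, Real.sqrt (μ p.1) * Real.sqrt (μ p.2) :=
      Finset.sum_nonneg fun p _ => mul_nonneg (Real.sqrt_nonneg _) (Real.sqrt_nonneg _)
    have hcard : (((Finset.univ : Finset ι).offDiag.card : ℝ))
        ≤ (Fintype.card ι : ℝ) * ((Fintype.card ι : ℝ) - 1) := by
      have hle : (Fintype.card ι) ≤ Fintype.card ι * Fintype.card ι := by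
        rcases Nat.eq_zero_or_pos (Fintype.card ι) with h | h
        · simp [h]
        · exact Nat.le_mul_of_pos_left _ h
      rw [Finset.offDiag_card (s := (Finset.univ : Finset ι)), Finset.card_univ]
      rw [Nat.cast_sub hle]
      push_cast
      nlinarith [hcc]
    calc ∑ p ∈ (Finset.univ : Finset ι).offDiag, Real.sqrt (μ p.1) * Real.sqrt (μ p.2)
        = Real.sqrt ((∑ p ∈ (Finset.univ : Finset ι).offDiag, Real.sqrt (μ p.1) * Real.sqrt (μ p.2)) ^ 2) := by
          rw [Real.sqrt_sq hnn]
      _ ≤ Real.sqrt (((Finset.univ : Finset ι).offDiag.card : ℝ) * ∑ p ∈ (Finset.univ : Finset ι).offDiag, μ p.1 * μ p.2) := by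
          apply Real.sqrt_le_sqrt
          exact hCS
      _ ≤ Real.sqrt (((Fintype.card ι : ℝ) * ((Fintype.card ι : ℝ) - 1)) *
            ∑ p ∈ (Finset.univ : Finset ι).offDiag, μ p.1 * μ p.2) := by
          apply Real.sqrt_le_sqrt
          apply mul_le_mul_of_nonneg_right hcard
          exact Finset.sum_nonneg fun p _ => mul_nonneg (hμ _) (hμ _)
      _ = Real.sqrt ((Fintype.card ι : ℝ) * ((Fintype.card ι : ℝ) - 1)) *
            Real.sqrt (∑ p ∈ (Finset.univ : Finset ι).offDiag, μ p.1 * μ p.2) := by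
          rw [Real.sqrt_mul hcc]
  rw [h1, h2]
  linarith

lemma sum_sq_le_sq_sum {ι : Type*} [Fintype ι] (μ : ι → ℝ) (hμ : ∀ i, 0 ≤ μ i) :
    ∑ i, (μ i) ^ 2 ≤ (∑ i, μ i) ^ 2 := by
  rw [pow_two, Finset.sum_mul]
  refine Finset.sum_le_sum fun i _ => ?_
  rw [pow_two]
  exact mul_le_mul_of_nonneg_left (Finset.single_le_sum (fun j _ => hμ j) (Finset.mem_univ i)) (hμ i)


lemma trace_re_eq_sum_eigen {σ : Matrix n n ℂ} (hσ : σ.PosSemidef) :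
    σ.trace.re = ∑ i, hσ.1.eigenvalues i := by
  rw [trace_eq_sum_eigen hσ.1, re_sum_coe]

lemma psd_trace_sq_le {σ : Matrix n n ℂ} (hσ : σ.PosSemidef) :
    ((σ * σ).trace).re ≤ (σ.trace.re) ^ 2 := by
  rw [trace_re_eq_sum_eigen hσ, trace_sq_eq_sum_eigen hσ.1]
  exact sum_sq_le_sq_sum _ hσ.eigenvalues_nonneg

lemma trace_sqrt_card_bound {σ : Matrix n n ℂ} (hσ : σ.PosSemidef) :
    (∑ i, Real.sqrt (hσ.1.eigenvalues i)) ^ 2 ≤ σ.trace.re +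
      Real.sqrt ((Fintype.card n : ℝ) * ((Fintype.card n : ℝ) - 1)) *
        Real.sqrt ((σ.trace.re) ^ 2 - ((σ * σ).trace).re) := by
  rw [trace_re_eq_sum_eigen hσ, trace_sq_eq_sum_eigen hσ.1]
  exact sqrt_sum_bound _ hσ.eigenvalues_nonneg

lemma trace_mul_eq_sum_pairs (X Y : Matrix n n ℂ) :
    (X * Y).trace = ∑ p : n × n, X p.1 p.2 * Y p.2 p.1 := by
  rw [Fintype.sum_prod_type]
  simp [Matrix.trace, Matrix.diag, Matrix.mul_apply]

lemma herm_trace_sq_re {X : Matrix n n ℂ} (hX : X.IsHermitian) :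
    ((X * X).trace).re = ∑ p : n × n, Complex.normSq (X p.1 p.2) := by
  rw [trace_mul_eq_sum_pairs, Complex.re_sum]
  refine Finset.sum_congr rfl fun p _ => ?_
  have h : X p.2 p.1 = starRingEnd ℂ (X p.1 p.2) := by
    conv_lhs => rw [← hX.eq, Matrix.conjTranspose_apply]
    rfl
  rw [h, Complex.mul_conj]
  simp

lemma herm_trace_sq_nonneg {X : Matrix n n ℂ} (hX : X.IsHermitian) :
    0 ≤ ((X * X).trace).re := by
  rw [herm_trace_sq_re hX]
  exact Finset.sum_nonneg fun p _ => Complex.normSq_nonneg _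

lemma trace_mul_re_le_frob {X Y : Matrix n n ℂ} (hX : X.IsHermitian) (hY : Y.IsHermitian) :
    ((X * Y).trace).re ≤ Real.sqrt (((X * X).trace).re) * Real.sqrt (((Y * Y).trace).re) := by
  rw [trace_mul_eq_sum_pairs, Complex.re_sum, herm_trace_sq_re hX, herm_trace_sq_re hY]
  have step1 : ∀ p : n × n, (X p.1 p.2 * Y p.2 p.1).re
      ≤ ‖X p.1 p.2‖ * ‖Y p.1 p.2‖ := by
    intro p
    have h : Y p.2 p.1 = starRingEnd ℂ (Y p.1 p.2) := by
      conv_lhs => rw [← hY.eq, Matrix.conjTranspose_apply]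
      rfl
    rw [h]
    calc (X p.1 p.2 * starRingEnd ℂ (Y p.1 p.2)).re
        ≤ ‖X p.1 p.2 * starRingEnd ℂ (Y p.1 p.2)‖ := Complex.re_le_norm _
      _ = ‖X p.1 p.2‖ * ‖Y p.1 p.2‖ := by
          rw [norm_mul, Complex.norm_conj]
  calc ∑ p : n × n, (X p.1 p.2 * Y p.2 p.1).re
      ≤ ∑ p : n × n, ‖X p.1 p.2‖ * ‖Y p.1 p.2‖ :=
        Finset.sum_le_sum fun p _ => step1 p
    _ ≤ Real.sqrt (∑ p : n × n, ‖X p.1 p.2‖ ^ 2) *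
          Real.sqrt (∑ p : n × n, ‖Y p.1 p.2‖ ^ 2) := by
        have hCS := Finset.sum_mul_sq_le_sq_mul_sq Finset.univ
          (fun p : n × n => ‖X p.1 p.2‖) (fun p => ‖Y p.1 p.2‖)
        have hnn : 0 ≤ ∑ p : n × n, ‖X p.1 p.2‖ * ‖Y p.1 p.2‖ :=
          Finset.sum_nonneg fun p _ => mul_nonneg (norm_nonneg _) (norm_nonneg _)
        calc ∑ p : n × n, ‖X p.1 p.2‖ * ‖Y p.1 p.2‖
            = Real.sqrt ((∑ p : n × n, ‖X p.1 p.2‖ * ‖Y p.1 p.2‖) ^ 2) := by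
              rw [Real.sqrt_sq hnn]
          _ ≤ Real.sqrt ((∑ p : n × n, ‖X p.1 p.2‖ ^ 2) *
                (∑ p : n × n, ‖Y p.1 p.2‖ ^ 2)) := Real.sqrt_le_sqrt hCS
          _ = _ := Real.sqrt_mul (Finset.sum_nonneg fun p _ => sq_nonneg _) _
    _ = _ := by
        congr 2 <;> exact Finset.sum_congr rfl fun p _ => by rw [Complex.sq_norm]

lemma key_sum_bound {k : ℕ} (q P : Fin k → ℝ) (R : ℝ)
    (hq : ∀ t, 0 ≤ q t) (hP : ∀ t, 0 ≤ P t) (hPq : ∀ t, P t ≤ q t ^ 2)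
    (hsum : ∑ t, q t = 1) (hR : R ≤ (∑ t, Real.sqrt (P t)) ^ 2) :
    ∑ t, Real.sqrt (q t ^ 2 - P t) ≤ Real.sqrt (1 - R) := by
  classical
  set S : Finset (Fin k) := Finset.univ.filter (fun t => q t ≠ 0) with hS
  have hout : ∀ t ∉ S, q t = 0 ∧ P t = 0 := by
    intro t ht
    have hq0 : q t = 0 := by
      by_contra h
      exact ht (Finset.mem_filter.mpr ⟨Finset.mem_univ _, h⟩)
    refine ⟨hq0, le_antisymm ?_ (hP t)⟩
    have := hPq t
    rw [hq0] at this
    simpa using this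
  have hSq : ∑ t ∈ S, q t ≤ 1 := by
    rw [← hsum]
    exact Finset.sum_le_sum_of_subset_of_nonneg (Finset.subset_univ _) fun t _ _ => hq t
  set A : ℝ := ∑ t ∈ S, P t / q t with hA
  have hA_nonneg : 0 ≤ A :=
    Finset.sum_nonneg fun t ht => div_nonneg (hP t) (hq t)
  have hterm : ∀ t ∈ S, P t / q t ≤ q t := by
    intro t ht
    have hqt : q t ≠ 0 := (Finset.mem_filter.mp ht).2
    rw [div_le_iff₀ (lt_of_le_of_ne (hq t) (Ne.symm hqt))]
    have := hPq t
    nlinarith [hq t]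
  have hA_le : A ≤ ∑ t ∈ S, q t := Finset.sum_le_sum hterm
  -- step 1: (∑ √P)² ≤ A
  have hstep1 : (∑ t, Real.sqrt (P t)) ^ 2 ≤ A := by
    have hzero : ∀ t ∈ Finset.univ \ S, Real.sqrt (P t) = 0 := by
      intro t ht
      rcases Finset.mem_sdiff.mp ht with ⟨_, htS⟩
      rw [(hout t htS).2, Real.sqrt_zero]
    have hres : ∑ t, Real.sqrt (P t) = ∑ t ∈ S, Real.sqrt (P t) := by
      rw [← Finset.sum_subset (Finset.subset_univ S)]
      intro t _ htS
      rw [(hout t htS).2, Real.sqrt_zero]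
    rw [hres]
    have hsplitP : ∀ t ∈ S, Real.sqrt (P t) = Real.sqrt (q t) * Real.sqrt (P t / q t) := by
      intro t ht
      have hqt : q t ≠ 0 := (Finset.mem_filter.mp ht).2
      rw [← Real.sqrt_mul (hq t)]
      congr 1
      field_simp
    rw [Finset.sum_congr rfl hsplitP]
    have hCS := Finset.sum_mul_sq_le_sq_mul_sq S
      (fun t => Real.sqrt (q t)) (fun t => Real.sqrt (P t / q t))
    calc (∑ t ∈ S, Real.sqrt (q t) * Real.sqrt (P t / q t)) ^ 2
        ≤ (∑ t ∈ S, Real.sqrt (q t) ^ 2) * (∑ t ∈ S, Real.sqrt (P t / q t) ^ 2) := hCS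
      _ = (∑ t ∈ S, q t) * A := by
          rw [hA]
          congr 1
          · exact Finset.sum_congr rfl fun t _ => Real.sq_sqrt (hq t)
          · exact Finset.sum_congr rfl fun t ht => Real.sq_sqrt
              (div_nonneg (hP t) (hq t))
      _ ≤ 1 * A := mul_le_mul_of_nonneg_right hSq hA_nonneg
      _ = A := one_mul A
  have hRA : R ≤ A := le_trans hR hstep1
  -- step 2
  have hres2 : ∑ t, Real.sqrt (q t ^ 2 - P t) = ∑ t ∈ S, Real.sqrt (q t ^ 2 - P t) := by
    rw [← Finset.sum_subset (Finset.subset_univ S)]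
    intro t _ htS
    rw [(hout t htS).1, (hout t htS).2]
    simp
  have hsplit2 : ∀ t ∈ S, Real.sqrt (q t ^ 2 - P t)
      = Real.sqrt (q t) * Real.sqrt (q t - P t / q t) := by
    intro t ht
    have hqt : q t ≠ 0 := (Finset.mem_filter.mp ht).2
    rw [← Real.sqrt_mul (hq t)]
    congr 1
    field_simp
  have hCS2 := Finset.sum_mul_sq_le_sq_mul_sq S
    (fun t => Real.sqrt (q t)) (fun t => Real.sqrt (q t - P t / q t))
  have hq2 : ∑ t ∈ S, Real.sqrt (q t) ^ 2 = ∑ t ∈ S, q t :=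
    Finset.sum_congr rfl fun t _ => Real.sq_sqrt (hq t)
  have hg2 : ∑ t ∈ S, Real.sqrt (q t - P t / q t) ^ 2 = (∑ t ∈ S, q t) - A := by
    rw [hA, ← Finset.sum_sub_distrib]
    exact Finset.sum_congr rfl fun t ht => Real.sq_sqrt (by linarith [hterm t ht])
  have hfin : (∑ t ∈ S, Real.sqrt (q t) * Real.sqrt (q t - P t / q t)) ^ 2 ≤ 1 - R := by
    calc (∑ t ∈ S, Real.sqrt (q t) * Real.sqrt (q t - P t / q t)) ^ 2
        ≤ (∑ t ∈ S, Real.sqrt (q t) ^ 2) * (∑ t ∈ S, Real.sqrt (q t - P t / q t) ^ 2) := hCS2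
      _ = (∑ t ∈ S, q t) * ((∑ t ∈ S, q t) - A) := by rw [hq2, hg2]
      _ ≤ 1 * (1 - R) := by
          apply mul_le_mul hSq (by linarith) (by linarith) (by norm_num)
      _ = 1 - R := one_mul _
  rw [hres2, Finset.sum_congr rfl hsplit2]
  have hnn : 0 ≤ ∑ t ∈ S, Real.sqrt (q t) * Real.sqrt (q t - P t / q t) :=
    Finset.sum_nonneg fun t _ => mul_nonneg (Real.sqrt_nonneg _) (Real.sqrt_nonneg _)
  calc ∑ t ∈ S, Real.sqrt (q t) * Real.sqrt (q t - P t / q t)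
      = Real.sqrt ((∑ t ∈ S, Real.sqrt (q t) * Real.sqrt (q t - P t / q t)) ^ 2) := by
        rw [Real.sqrt_sq hnn]
    _ ≤ Real.sqrt (1 - R) := Real.sqrt_le_sqrt hfin

end AuxLemmas

noncomputable section Glue
open Matrix
open scoped Kronecker

def msl {m n₀ : Type*} (X : Matrix (m × n₀) (m × n₀) ℂ) (a b : n₀) : Matrix m m ℂ :=
  Matrix.of fun i k => X (i, a) (k, b)

lemma tensExtA_apply {s n₀ : Type*} (E : Matrix s s ℂ → Matrix s s ℂ)
    (X : Matrix (s × n₀) (s × n₀) ℂ) (p q : s × n₀) :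
    tensExtA E X p q = E (msl X p.2 q.2) p.1 q.1 := rfl

lemma K_msl_outer {m n₀ : Type*} [Fintype m] (K : Matrix m m ℂ) (ψ : m × n₀ → ℂ) (a b : n₀) :
    K * msl (outer ψ) a b * Kᴴ = msl (outer (lact K ψ)) a b := by
  ext i k
  simp only [msl, outer, lact, Matrix.mul_apply, Matrix.conjTranspose_apply, Matrix.of_apply,
    star_sum, star_mul', Finset.sum_mul, Finset.mul_sum]
  refine Finset.sum_congr rfl fun x _ => ?_
  refine Finset.sum_congr rfl fun y _ => ?_
  ring

lemma outer_herm {N : Type*} (ψ : N → ℂ) : (outer ψ).IsHermitian := by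
  ext i j
  simp [outer, Matrix.conjTranspose_apply, mul_comm]

lemma outer_psd {N : Type*} [Fintype N] (ψ : N → ℂ) : (outer ψ).PosSemidef := by
  refine Matrix.PosSemidef.of_dotProduct_mulVec_nonneg (outer_herm ψ) fun x => ?_
  set c : ℂ := ∑ j, star (ψ j) * x j with hc
  have h1 : ∀ i, (outer ψ *ᵥ x) i = ψ i * c := by
    intro i
    simp only [mulVec, dotProduct, outer, Matrix.of_apply, hc, Finset.mul_sum]
    refine Finset.sum_congr rfl fun j _ => ?_
    ring
  have h2 : (star x) ⬝ᵥ ((outer ψ) *ᵥ x) = star c * c := by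
    simp only [dotProduct, h1, Pi.star_apply]
    have h3 : star c = ∑ i, star (x i) * ψ i := by
      rw [hc, star_sum]
      refine Finset.sum_congr rfl fun i _ => ?_
      rw [star_mul', star_star]
      ring
    rw [h3, Finset.sum_mul]
    refine Finset.sum_congr rfl fun i _ => ?_
    ring
  rw [h2]
  exact star_mul_self_nonneg _

lemma pt2_herm {m n₀ : Type*} {X : Matrix (m × n₀) (m × n₀) ℂ} (hX : X.IsHermitian) :
    (pt₂ X).IsHermitian := by
  ext p q
  have := congrFun (congrFun hX.eq (p.1, q.2)) (q.1, p.2)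
  simp only [Matrix.conjTranspose_apply] at this ⊢
  simp only [pt₂, Matrix.of_apply]
  exact this

lemma pt1_eq_pt2_transpose {m n₀ : Type*} (X : Matrix (m × n₀) (m × n₀) ℂ) :
    pt₁ X = (pt₂ X)ᵀ := rfl

lemma pt2_tensExtA {s n₀ : Type*} (Φ : Matrix s s ℂ → Matrix s s ℂ)
    (X : Matrix (s × n₀) (s × n₀) ℂ) :
    pt₂ (tensExtA Φ X) = tensExtA Φ (pt₂ X) := rfl

lemma pt2_sum {m n₀ : Type*} {k : ℕ} (f : Fin k → Matrix (m × n₀) (m × n₀) ℂ) :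
    pt₂ (∑ t, f t) = ∑ t, pt₂ (f t) := by
  ext p q
  show (∑ t, f t) (p.1, q.2) (q.1, p.2) = (∑ t, pt₂ (f t)) p q
  rw [Matrix.sum_apply, Matrix.sum_apply]
  rfl

lemma pt2_outer_sq {m n₀ : Type*} [Fintype m] [Fintype n₀] [DecidableEq m] [DecidableEq n₀]
    (φ : m × n₀ → ℂ) :
    (pt₂ (outer φ)) * (pt₂ (outer φ))
      = ((Matrix.of fun i j => φ (i, j)) * (Matrix.of fun i j => φ (i, j))ᴴ) ⊗ₖ
        ((Matrix.of fun i j => φ (i, j))ᴴ * (Matrix.of fun i j => φ (i, j))) := by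
  ext ⟨i, j⟩ ⟨k, l⟩
  have hL : (pt₂ (outer φ) * pt₂ (outer φ)) (i, j) (k, l)
      = ∑ a, ∑ b, (φ (i, b) * star (φ (a, j))) * (φ (a, l) * star (φ (k, b))) := by
    rw [Matrix.mul_apply, Fintype.sum_prod_type]
    rfl
  rw [hL]
  simp only [Matrix.kroneckerMap_apply, Matrix.mul_apply, Matrix.conjTranspose_apply,
    Matrix.of_apply]
  rw [Finset.sum_mul_sum, Finset.sum_comm]
  refine Finset.sum_congr rfl fun b _ => ?_
  refine Finset.sum_congr rfl fun a _ => ?_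
  ring

lemma sum_psd {N : Type*} [Fintype N] {k : ℕ} {f : Fin k → Matrix N N ℂ}
    (h : ∀ t, (f t).PosSemidef) : (∑ t, f t).PosSemidef := by
  classical
  refine Finset.sum_induction f _ (fun a b ha hb => ha.add hb) Matrix.PosSemidef.zero
    (fun t _ => h t)


lemma msl_sub {m n₀ : Type*} (P Q : Matrix (m × n₀) (m × n₀) ℂ) (a b : n₀) :
    msl (P - Q) a b = msl P a b - msl Q a b := by
  ext i k; simp [msl, Matrix.sub_apply]

lemma tensExtA_sub {s n₀ : Type*} {Φ : Matrix s s ℂ → Matrix s s ℂ} (hΦ : IsLinearMap ℂ Φ)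
    (P Q : Matrix (s × n₀) (s × n₀) ℂ) :
    tensExtA Φ (P - Q) = tensExtA Φ P - tensExtA Φ Q := by
  ext p q
  have hsub : ∀ X Y, Φ (X - Y) = Φ X - Φ Y := fun X Y => by
    have h := (IsLinearMap.mk' Φ hΦ).map_sub X Y
    simpa using h
  show Φ (msl (P - Q) p.2 q.2) p.1 q.1 = _
  rw [msl_sub, hsub]
  rfl

lemma trace_prod {m n₀ : Type*} [Fintype m] [Fintype n₀] (X : Matrix (m × n₀) (m × n₀) ℂ) :
    X.trace = ∑ b : n₀, (msl X b b).trace := by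
  calc X.trace = ∑ p : m × n₀, X p p := rfl
    _ = ∑ a, ∑ b, X (a, b) (a, b) := by rw [Fintype.sum_prod_type]
    _ = ∑ b, ∑ a, X (a, b) (a, b) := by rw [Finset.sum_comm]
    _ = ∑ b, (msl X b b).trace := rfl

lemma tensExtA_trace {d : ℕ} {Φ : Matrix (Fin d) (Fin d) ℂ → Matrix (Fin d) (Fin d) ℂ}
    (hΦ : IsTP Φ) (X : Matrix (Fin d × Fin d) (Fin d × Fin d) ℂ) :
    (tensExtA Φ X).trace = X.trace := by
  rw [trace_prod, trace_prod X]
  refine Finset.sum_congr rfl fun b _ => ?_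
  have h : msl (tensExtA Φ X) b b = Φ (msl X b b) := rfl
  rw [h, hΦ]

lemma choi_decomp {d k : ℕ} (E : Matrix (Fin d) (Fin d) ℂ → Matrix (Fin d) (Fin d) ℂ)
    (K : Fin k → Matrix (Fin d) (Fin d) ℂ)
    (Φ : Fin k → (Matrix (Fin d) (Fin d) ℂ → Matrix (Fin d) (Fin d) ℂ))
    (hE : ∀ ρ, E ρ = ∑ t, Φ t (K t * ρ * (K t)ᴴ)) :
    ChoiMap E = ∑ t, tensExtA (Φ t) (outer (lact (K t) (maxEntVec d))) := by
  ext p q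
  show E (msl (outer (maxEntVec d)) p.2 q.2) p.1 q.1 = _
  rw [hE, Matrix.sum_apply, Matrix.sum_apply]
  refine Finset.sum_congr rfl fun t _ => ?_
  rw [K_msl_outer]
  rfl

lemma ptr2_choi {d k : ℕ} (E : Matrix (Fin d) (Fin d) ℂ → Matrix (Fin d) (Fin d) ℂ)
    (K : Fin k → Matrix (Fin d) (Fin d) ℂ)
    (hE : ∀ ρ, E ρ = ∑ t, K t * ρ * (K t)ᴴ) :
    ptr₂ (ChoiMap E) = ∑ t, (Matrix.of fun i j => lact (K t) (maxEntVec d) (i, j)) *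
      (Matrix.of fun i j => lact (K t) (maxEntVec d) (i, j))ᴴ := by
  ext i k
  show ∑ j, ChoiMap E (i, j) (k, j) = _
  have hentry : ∀ j, ChoiMap E (i, j) (k, j)
      = ∑ t, lact (K t) (maxEntVec d) (i, j) * star (lact (K t) (maxEntVec d) (k, j)) := by
    intro j
    show E (msl (outer (maxEntVec d)) j j) i k = _
    rw [hE, Matrix.sum_apply]
    refine Finset.sum_congr rfl fun t _ => ?_
    rw [K_msl_outer]
    rfl
  rw [Finset.sum_congr rfl (fun j _ => hentry j), Finset.sum_comm, Matrix.sum_apply]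
  refine Finset.sum_congr rfl fun t _ => ?_
  rw [Matrix.mul_apply]
  refine Finset.sum_congr rfl fun j _ => ?_
  simp [Matrix.conjTranspose_apply]

lemma lact_maxEnt {d : ℕ} (K : Matrix (Fin d) (Fin d) ℂ) (i j : Fin d) :
    lact K (maxEntVec d) (i, j) = (((Real.sqrt d)⁻¹ : ℝ) : ℂ) * K i j := by
  simp only [lact, maxEntVec, mul_ite, mul_zero]
  rw [Finset.sum_ite_eq' Finset.univ j (fun a => K i a * (((Real.sqrt d)⁻¹ : ℝ) : ℂ))]
  simp [mul_comm]

end Glue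

set_option maxHeartbeats 1000000 in
/-- combined map-based witness: if `Δ(t₁,t₂) > 0` (built from the Choi
states of the two maps via the PPT lower bound and the purity upper bound), then the
pair of channels is not realizable with classical memory. -/
theorem stmt18 {d : ℕ} (hd : 0 < d)
    (E₁ E₂ : Matrix (Fin d) (Fin d) ℂ → Matrix (Fin d) (Fin d) ℂ)
    (h₁ : IsLinearMap ℂ E₁ ∧ IsCP E₁ ∧ IsTP E₁)
    (h₂ : IsLinearMap ℂ E₂ ∧ IsCP E₂ ∧ IsTP E₂)
    (hΔ : 0 < max 0 (Real.sqrt (2 / (((d : ℝ) ^ 2) * ((d : ℝ) ^ 2 - 1))) *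
        max (traceNorm (pt₁ (ChoiMap E₂)) - 1) (traceNorm (pt₂ (ChoiMap E₂)) - 1)
      - Real.sqrt (2 * (1 - purity (ptr₂ (ChoiMap E₁)))))) :
    ¬ ∃ (k : ℕ) (K : Fin k → Matrix (Fin d) (Fin d) ℂ)
        (Φ : Fin k → (Matrix (Fin d) (Fin d) ℂ → Matrix (Fin d) (Fin d) ℂ)),
      (∑ i, (K i)ᴴ * K i = 1) ∧ (∀ i, IsLinearMap ℂ (Φ i)) ∧ (∀ i, IsCP (Φ i)) ∧
      (∀ i, IsTP (Φ i)) ∧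
      (∀ ρ, E₁ ρ = ∑ i, K i * ρ * (K i)ᴴ) ∧
      (∀ ρ, E₂ ρ = ∑ i, Φ i (K i * ρ * (K i)ᴴ)) := by
  rintro ⟨k, K, Φ, hK, hΦlin, hΦCP, hΦTP, hE1, hE2⟩
  -- basic data
  set G : Fin k → Matrix (Fin d) (Fin d) ℂ :=
    fun t => Matrix.of fun i j => lact (K t) (maxEntVec d) (i, j) with hGdef
  set σm : Fin k → Matrix (Fin d) (Fin d) ℂ := fun t => G t * (G t)ᴴ with hσdef
  set Cm : Fin k → Matrix (Fin d) (Fin d) ℂ := fun t => (G t)ᴴ * G t with hCdef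
  have hσ : ∀ t, (σm t).PosSemidef := fun t => Matrix.posSemidef_self_mul_conjTranspose _
  have hC : ∀ t, (Cm t).PosSemidef := fun t => Matrix.posSemidef_conjTranspose_mul_self _
  set q : Fin k → ℝ := fun t => ((σm t).trace).re with hqdef
  set P : Fin k → ℝ := fun t => (((σm t) * (σm t)).trace).re with hPdef
  have hDpos : (1 : ℝ) ≤ (d : ℝ) := by exact_mod_cast hd
  -- normalization : ∑ q = 1
  have hGK : ∀ t, G t = (((Real.sqrt d)⁻¹ : ℝ) : ℂ) • K t := by
    intro t
    ext i j
    rw [hGdef]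
    simp only [Matrix.of_apply, Matrix.smul_apply, smul_eq_mul]
    exact lact_maxEnt (K t) i j
  have hσK : ∀ t, σm t = (((d : ℝ)⁻¹ : ℝ) : ℂ) • (K t * (K t)ᴴ) := by
    intro t
    rw [hσdef]
    simp only
    rw [hGK t, Matrix.conjTranspose_smul, Matrix.smul_mul, Matrix.mul_smul, smul_smul]
    congr 1
    rw [Complex.star_def, Complex.conj_ofReal, ← Complex.ofReal_mul]
    congr 1
    rw [← mul_inv, Real.mul_self_sqrt (Nat.cast_nonneg d)]
  have hsumqc : ∑ t, (σm t).trace = 1 := by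
    have h1 : ∀ t, (σm t).trace = (((d : ℝ)⁻¹ : ℝ) : ℂ) * ((K t)ᴴ * K t).trace := by
      intro t
      rw [hσK t, Matrix.trace_smul, smul_eq_mul, Matrix.trace_mul_comm]
    rw [Finset.sum_congr rfl fun t _ => h1 t, ← Finset.mul_sum, ← Matrix.trace_sum, hK,
      Matrix.trace_one]
    have hdn : ((d : ℝ) : ℂ) ≠ 0 := by
      simp only [ne_eq, Complex.ofReal_natCast, Nat.cast_eq_zero]
      omega
    rw [Fintype.card_fin]
    push_cast
    field_simp
  have hsumq : ∑ t, q t = 1 := by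
    have := congrArg Complex.re hsumqc
    rw [Complex.re_sum] at this
    simpa using this
  -- Choi state of E₂ decomposes
  have hχ2 : ChoiMap E₂ = ∑ t, tensExtA (Φ t) (outer (lact (K t) (maxEntVec d))) :=
    choi_decomp E₂ K Φ hE2
  set M : Fin k → Matrix ((Fin d) × (Fin d)) ((Fin d) × (Fin d)) ℂ :=
    fun t => pt₂ (outer (lact (K t) (maxEntVec d))) with hMdef
  have hMherm : ∀ t, (M t).IsHermitian := fun t => pt2_herm (outer_herm _)
  have hM2 : ∀ t, (M t)ᴴ * (M t) = σm t ⊗ₖ Cm t := by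
    intro t
    rw [hMdef]
    simp only
    rw [(hMherm t).eq]
    exact pt2_outer_sq (lact (K t) (maxEntVec d))
  -- per-term trace norm bound
  set cc : ℝ := Real.sqrt ((d : ℝ) * ((d : ℝ) - 1)) with hccdef
  have hqnn : ∀ t, 0 ≤ q t := fun t => psd_trace_re_nonneg (hσ t)
  have hPnn : ∀ t, 0 ≤ P t := fun t => herm_trace_sq_nonneg (hσ t).1
  have hPq : ∀ t, P t ≤ q t ^ 2 := fun t => psd_trace_sq_le (hσ t)
  have hMnormle : ∀ t, traceNorm (M t) ≤ q t + cc * Real.sqrt (q t ^ 2 - P t) := by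
    intro t
    have hx := trace_sqrt_card_bound (hσ t)
    have hy := trace_sqrt_card_bound (hC t)
    simp only [Fintype.card_fin] at hx hy
    have hCtr : (Cm t).trace = (σm t).trace := by
      rw [hσdef, hCdef]
      simp only
      rw [Matrix.trace_mul_comm]
    have hCtr2 : ((Cm t) * (Cm t)).trace = ((σm t) * (σm t)).trace := by
      have e1 : (Cm t) * (Cm t) = (G t)ᴴ * (G t * ((G t)ᴴ * G t)) := by
        rw [hCdef]; simp only [Matrix.mul_assoc]
      have e2 : (σm t) * (σm t) = (G t * ((G t)ᴴ * G t)) * (G t)ᴴ := by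
        rw [hσdef]; simp only [Matrix.mul_assoc]
      rw [e1, e2, Matrix.trace_mul_comm]
    rw [hCtr, hCtr2] at hy
    have hTNeq := traceNorm_eq_of_kron (hσ t) (hC t) (hM2 t)
    have hxnn : 0 ≤ ∑ i, Real.sqrt ((hσ t).1.eigenvalues i) :=
      Finset.sum_nonneg fun i _ => Real.sqrt_nonneg _
    have hynn : 0 ≤ ∑ i, Real.sqrt ((hC t).1.eigenvalues i) :=
      Finset.sum_nonneg fun i _ => Real.sqrt_nonneg _
    rw [hTNeq]
    rw [hqdef, hPdef] at *
    nlinarith [sq_nonneg ((∑ i, Real.sqrt ((hσ t).1.eigenvalues i))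
      - (∑ i, Real.sqrt ((hC t).1.eigenvalues i)))]
  -- Jordan decompositions of the M t
  have hJ := fun t => jordan (hMherm t)
  choose Pm Qm hPm hQm hMeq hMnorm using hJ
  -- trace norm chain for pt₂ of the Choi state
  have hpt2 : pt₂ (ChoiMap E₂)
      = (∑ t, tensExtA (Φ t) (Pm t)) - (∑ t, tensExtA (Φ t) (Qm t)) := by
    rw [hχ2, pt2_sum, ← Finset.sum_sub_distrib]
    refine Finset.sum_congr rfl fun t _ => ?_
    rw [pt2_tensExtA, ← tensExtA_sub (hΦlin t)]
    exact congrArg (tensExtA (Φ t)) (hMeq t)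
  have hSP : (∑ t, tensExtA (Φ t) (Pm t)).PosSemidef :=
    sum_psd fun t => hΦCP t d (Pm t) (hPm t)
  have hSQ : (∑ t, tensExtA (Φ t) (Qm t)).PosSemidef :=
    sum_psd fun t => hΦCP t d (Qm t) (hQm t)
  have hHerm : (pt₂ (ChoiMap E₂)).IsHermitian := by
    rw [hpt2]
    exact hSP.1.sub hSQ.1
  have hTNle : traceNorm (pt₂ (ChoiMap E₂)) ≤ ∑ t, traceNorm (M t) := by
    have h := traceNorm_le_decomp hHerm hSP hSQ hpt2
    have hPtr : (∑ t, tensExtA (Φ t) (Pm t)).trace.re = ∑ t, (Pm t).trace.re := by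
      rw [Matrix.trace_sum, Complex.re_sum]
      exact Finset.sum_congr rfl fun t _ => by rw [tensExtA_trace (hΦTP t)]
    have hQtr : (∑ t, tensExtA (Φ t) (Qm t)).trace.re = ∑ t, (Qm t).trace.re := by
      rw [Matrix.trace_sum, Complex.re_sum]
      exact Finset.sum_congr rfl fun t _ => by rw [tensExtA_trace (hΦTP t)]
    rw [hPtr, hQtr] at h
    rw [← Finset.sum_add_distrib] at h
    calc traceNorm (pt₂ (ChoiMap E₂)) ≤ ∑ t, ((Pm t).trace.re + (Qm t).trace.re) := h
      _ = ∑ t, traceNorm (M t) := Finset.sum_congr rfl fun t _ => (hMnorm t).symm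
  have hTN1 : traceNorm (pt₁ (ChoiMap E₂)) = traceNorm (pt₂ (ChoiMap E₂)) := by
    rw [pt1_eq_pt2_transpose, traceNorm_transpose hHerm]
  -- purity side
  have hptr : ptr₂ (ChoiMap E₁) = ∑ t, σm t := ptr2_choi E₁ K hE1
  set R : ℝ := purity (ptr₂ (ChoiMap E₁)) with hRdef
  have hRval : R = (((∑ t, σm t) * (∑ t, σm t)).trace).re := by
    rw [hRdef, purity, hptr]
  have hRle : R ≤ (∑ t, Real.sqrt (P t)) ^ 2 := by
    rw [hRval]
    have hexp : (∑ t, σm t) * (∑ t, σm t) = ∑ t, ∑ u, σm t * σm u := by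
      rw [Finset.sum_mul_sum]
    rw [hexp, Matrix.trace_sum, Complex.re_sum]
    have hterm : ∀ t, ((∑ u, σm t * σm u).trace).re ≤ ∑ u, Real.sqrt (P t) * Real.sqrt (P u) := by
      intro t
      rw [Matrix.trace_sum, Complex.re_sum]
      refine Finset.sum_le_sum fun u _ => ?_
      have := trace_mul_re_le_frob (hσ t).1 (hσ u).1
      exact this
    calc ∑ t, ((∑ u, σm t * σm u).trace).re
        ≤ ∑ t, ∑ u, Real.sqrt (P t) * Real.sqrt (P u) :=
          Finset.sum_le_sum fun t _ => hterm t
      _ = (∑ t, Real.sqrt (P t)) ^ 2 := by rw [pow_two, Finset.sum_mul_sum]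
  have hkey : ∑ t, Real.sqrt (q t ^ 2 - P t) ≤ Real.sqrt (1 - R) :=
    key_sum_bound q P R hqnn hPnn hPq hsumq hRle
  -- final numerics
  set TN : ℝ := traceNorm (pt₂ (ChoiMap E₂)) with hTNdef
  have hTNfin : TN ≤ 1 + cc * Real.sqrt (1 - R) := by
    have h1 : TN ≤ ∑ t, (q t + cc * Real.sqrt (q t ^ 2 - P t)) :=
      le_trans hTNle (Finset.sum_le_sum fun t _ => hMnormle t)
    rw [Finset.sum_add_distrib, hsumq, ← Finset.mul_sum] at h1
    have hccnn : 0 ≤ cc := Real.sqrt_nonneg _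
    nlinarith [hkey, Real.sqrt_nonneg (1 - R)]
  set pre : ℝ := Real.sqrt (2 / (((d : ℝ) ^ 2) * ((d : ℝ) ^ 2 - 1))) with hpredef
  have hprenn : 0 ≤ pre := Real.sqrt_nonneg _
  have hD21 : (1:ℝ) ≤ (d : ℝ) ^ 2 := by nlinarith
  have hdenom : (0:ℝ) ≤ ((d : ℝ) ^ 2) * ((d : ℝ) ^ 2 - 1) := by nlinarith
  have hprecc : pre * cc ≤ Real.sqrt 2 := by
    rw [hpredef, hccdef, ← Real.sqrt_mul (div_nonneg (by norm_num) hdenom)]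
    apply Real.sqrt_le_sqrt
    rcases Nat.lt_or_ge d 2 with hd2 | hd2
    · have hone : d = 1 := by omega
      subst hone
      norm_num
    · have hD2 : (2 : ℝ) ≤ (d : ℝ) := by exact_mod_cast hd2
      have hpos : (0:ℝ) < ((d : ℝ) ^ 2) * ((d : ℝ) ^ 2 - 1) := by nlinarith
      rw [div_mul_eq_mul_div, div_le_iff₀ hpos]
      have e : ((d:ℝ)^2) * ((d:ℝ)^2 - 1) = ((d:ℝ) * ((d:ℝ) - 1)) * ((d:ℝ) * ((d:ℝ) + 1)) := by
        ring
      have hb : (0:ℝ) ≤ (d:ℝ) * ((d:ℝ) - 1) := by nlinarith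
      have hc : (1:ℝ) ≤ (d:ℝ) * ((d:ℝ) + 1) := by nlinarith
      nlinarith [mul_le_mul_of_nonneg_left hc hb]
  have hX : pre * max (traceNorm (pt₁ (ChoiMap E₂)) - 1) (traceNorm (pt₂ (ChoiMap E₂)) - 1)
      - Real.sqrt (2 * (1 - R)) ≤ 0 := by
    rw [hTN1, ← hTNdef, max_self]
    have hs1R : (0:ℝ) ≤ Real.sqrt (1 - R) := Real.sqrt_nonneg _
    have h2 : Real.sqrt (2 * (1 - R)) = Real.sqrt 2 * Real.sqrt (1 - R) :=
      Real.sqrt_mul (by norm_num) _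
    rcases le_total (TN - 1) 0 with hc | hc
    · have : pre * (TN - 1) ≤ 0 := mul_nonpos_of_nonneg_of_nonpos hprenn hc
      have : (0:ℝ) ≤ Real.sqrt (2 * (1 - R)) := Real.sqrt_nonneg _
      linarith
    · have hb : TN - 1 ≤ cc * Real.sqrt (1 - R) := by linarith
      have h3 : pre * (TN - 1) ≤ pre * (cc * Real.sqrt (1 - R)) :=
        mul_le_mul_of_nonneg_left hb hprenn
      have h4 : pre * (cc * Real.sqrt (1 - R)) = (pre * cc) * Real.sqrt (1 - R) := by ring
      have h5 : (pre * cc) * Real.sqrt (1 - R) ≤ Real.sqrt 2 * Real.sqrt (1 - R) :=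
        mul_le_mul_of_nonneg_right hprecc hs1R
      rw [h2]
      linarith
  rw [max_eq_left hX] at hΔ
  exact lt_irrefl 0 hΔ
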